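/- arXiv:1707.07154 — 2 statements merged into one kernel-verified Lean document; each statement's English description precedes it below -/
import Mathlib

section
/- (Lagrange, 1768) If x is a quadratic irrational real number, then its sequence of partial quotients (a_n) is eventually periodic: there exist N ≥ 0 and T ≥ 1 such that a_{n+T} = a_n for all n ≥ N. -/
/-- The complete quotients of a real number `x`:
`cq x 0 = x` and `cq x (n+1) = 1 / (cq x n - ⌊cq x n⌋)`. -/
noncomputable def cq (x : ℝ) : ℕ → ℝ
  | 0 => x
  | n + 1 => (Int.fract (cq x n))⁻¹

/-- The partial quotients of a real number `x`: `pq x n = ⌊cq x n⌋`. -/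
noncomputable def pq (x : ℝ) (n : ℕ) : ℤ := ⌊cq x n⌋

/-- The conjugate sequence. -/
noncomputable def yq (x : ℝ) (A B : ℤ) : ℕ → ℝ
  | 0 => -((B : ℝ) / (A : ℝ)) - x
  | n + 1 => (yq x A B n - (pq x n : ℝ))⁻¹

/-- The integer coefficient sequence. -/
noncomputable def co (x : ℝ) (A B C : ℤ) : ℕ → ℤ × ℤ × ℤ
  | 0 => (A, B, C)
  | n + 1 =>
    ((co x A B C n).1 * (pq x n) ^ 2 + (co x A B C n).2.1 * (pq x n) + (co x A B C n).2.2,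
      2 * (co x A B C n).1 * (pq x n) + (co x A B C n).2.1,
      (co x A B C n).1)

lemma cq_succ (x : ℝ) (n : ℕ) : cq x (n + 1) = (Int.fract (cq x n))⁻¹ := rfl

lemma cq_irr (x : ℝ) (hx : Irrational x) : ∀ n, Irrational (cq x n) := by
  intro n
  induction n with
  | zero => exact hx
  | succ n ih =>
    rw [cq_succ]
    have : Irrational (Int.fract (cq x n)) := by
      rw [Int.fract]
      exact ih.sub_intCast _
    exact this.inv

lemma fract_cq_pos (x : ℝ) (hx : Irrational x) (n : ℕ) : 0 < Int.fract (cq x n) := by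
  rcases lt_or_eq_of_le (Int.fract_nonneg (cq x n)) with h | h
  · exact h
  · exfalso
    have h2 : Irrational (Int.fract (cq x n)) := by
      rw [Int.fract]; exact (cq_irr x hx n).sub_intCast _
    rw [← h] at h2
    exact h2.ne_int 0 (by norm_num)

lemma one_lt_cq (x : ℝ) (hx : Irrational x) (n : ℕ) : 1 < cq x (n + 1) := by
  rw [cq_succ]
  have h1 := fract_cq_pos x hx n
  have h2 := Int.fract_lt_one (cq x n)
  rw [lt_inv_comm₀ one_pos h1] at *
  simpa using h2

lemma one_le_pq (x : ℝ) (hx : Irrational x) (n : ℕ) : 1 ≤ pq x (n + 1) := by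
  rw [pq, Int.le_floor]
  exact_mod_cast (one_lt_cq x hx n).le

lemma cq_shift (x : ℝ) {i j : ℕ} (h : cq x i = cq x j) : ∀ k, cq x (i + k) = cq x (j + k) := by
  intro k
  induction k with
  | zero => simpa using h
  | succ k ih =>
    have : ∀ m, cq x (m + (k+1)) = (Int.fract (cq x (m + k)))⁻¹ := fun m => rfl
    rw [this, this, ih]


lemma yq_succ (x : ℝ) (A B : ℤ) (n : ℕ) :
    yq x A B (n + 1) = (yq x A B n - (pq x n : ℝ))⁻¹ := rfl

lemma co_succ (x : ℝ) (A B C : ℤ) (n : ℕ) :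
    co x A B C (n + 1) =
      ((co x A B C n).1 * (pq x n) ^ 2 + (co x A B C n).2.1 * (pq x n) + (co x A B C n).2.2,
        2 * (co x A B C n).1 * (pq x n) + (co x A B C n).2.1,
        (co x A B C n).1) := rfl

lemma lag_inv (x : ℝ) (hx : Irrational x) (A B C : ℤ) (hA : A ≠ 0)
    (hroot : (A : ℝ) * x ^ 2 + (B : ℝ) * x + (C : ℝ) = 0) (n : ℕ) :
    (co x A B C n).1 ≠ 0 ∧
    ((co x A B C n).2.1 : ℝ) = -(co x A B C n).1 * (cq x n + yq x A B n) ∧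
    ((co x A B C n).2.2 : ℝ) = (co x A B C n).1 * (cq x n * yq x A B n) ∧
    Irrational (yq x A B n) := by
  induction n with
  | zero =>
    have hAR : (A : ℝ) ≠ 0 := Int.cast_ne_zero.mpr hA
    refine ⟨hA, ?_, ?_, ?_⟩
    · show (B : ℝ) = -A * (x + (-((B : ℝ) / A) - x))
      field_simp
      ring
    · show (C : ℝ) = A * (x * (-((B : ℝ) / A) - x))
      have : (A : ℝ) * (x * (-((B : ℝ) / A) - x)) = -(B : ℝ) * x - A * x ^ 2 := by
        field_simp
      rw [this]; linarith [hroot]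
    · show Irrational (-((B : ℝ) / A) - x)
      have hq : (((-B / A : ℚ)) : ℝ) = -((B : ℝ) / A) := by push_cast; ring
      rw [← hq]
      exact hx.ratCast_sub _
  | succ n ih =>
    obtain ⟨h1, hB, hC, hyirr⟩ := ih
    set a : ℤ := pq x n with ha
    set u : ℝ := cq x n with hu
    set v : ℝ := yq x A B n with hv
    have hxirr := cq_irr x hx n
    have hua : u - (a : ℝ) ≠ 0 := sub_ne_zero.mpr (hxirr.ne_int a)
    have hva : v - (a : ℝ) ≠ 0 := sub_ne_zero.mpr (hyirr.ne_int a)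
    have h1R : ((co x A B C n).1 : ℝ) ≠ 0 := Int.cast_ne_zero.mpr h1
    have hcqs : cq x (n + 1) = (u - (a : ℝ))⁻¹ := by
      rw [cq_succ, Int.fract]
      rfl
    have hyqs : yq x A B (n + 1) = (v - (a : ℝ))⁻¹ := yq_succ x A B n
    have hA' : (((co x A B C (n+1)).1 : ℤ) : ℝ)
        = (co x A B C n).1 * ((a : ℝ) - u) * ((a : ℝ) - v) := by
      rw [co_succ]
      push_cast
      rw [hB, hC]
      ring
    have hA'ne : ((co x A B C (n+1)).1 : ℝ) ≠ 0 := by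
      rw [hA']
      refine mul_ne_zero (mul_ne_zero h1R ?_) ?_
      · intro h; apply hua; linarith [h]
      · intro h; apply hva; linarith [h]
    refine ⟨Int.cast_ne_zero.mp hA'ne, ?_, ?_, ?_⟩
    · have : ((co x A B C (n+1)).2.1 : ℝ) = 2 * (co x A B C n).1 * (a : ℝ) + (co x A B C n).2.1 := by
        rw [co_succ]; push_cast; ring
      rw [this, hA', hcqs, hyqs, hB]
      field_simp
      ring
    · have : ((co x A B C (n+1)).2.2 : ℝ) = ((co x A B C n).1 : ℝ) := by
        rw [co_succ]
      rw [this, hA', hcqs, hyqs]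
      field_simp
      ring
    · rw [hyqs]
      exact ((hyirr.sub_intCast a).inv)

lemma lag_disc (x : ℝ) (A B C : ℤ) (n : ℕ) :
    (co x A B C n).2.1 ^ 2 - 4 * (co x A B C n).1 * (co x A B C n).2.2 = B ^ 2 - 4 * A * C := by
  induction n with
  | zero => rfl
  | succ n ih =>
    rw [co_succ]
    simp only
    linear_combination ih


lemma lag_dec (x : ℝ) (hx : Irrational x) (A B C : ℤ) (hA : A ≠ 0)
    (hroot : (A : ℝ) * x ^ 2 + (B : ℝ) * x + (C : ℝ) = 0) (n : ℕ)
    (h0 : 0 < yq x A B n - (pq x n : ℝ)) (h1' : yq x A B n - (pq x n : ℝ) < 1) :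
    (co x A B C (n + 1)).1.natAbs < (co x A B C n).1.natAbs := by
  obtain ⟨hne, hB, hC, hyirr⟩ := lag_inv x hx A B C hA hroot n
  have hA' : (((co x A B C (n+1)).1 : ℤ) : ℝ)
      = (co x A B C n).1 * (((pq x n : ℤ) : ℝ) - cq x n) * (((pq x n : ℤ) : ℝ) - yq x A B n) := by
    rw [co_succ]
    push_cast
    rw [hB, hC]
    ring
  have hfr0 : 0 < cq x n - ((pq x n : ℤ) : ℝ) := by
    have := fract_cq_pos x hx n
    rw [Int.fract] at this
    exact this
  have hfr1 : cq x n - ((pq x n : ℤ) : ℝ) < 1 := by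
    have := Int.fract_lt_one (cq x n)
    rw [Int.fract] at this
    exact this
  have habs : |(((co x A B C (n+1)).1 : ℤ) : ℝ)| < |(((co x A B C n).1 : ℤ) : ℝ)| := by
    rw [hA', abs_mul, abs_mul]
    have hpos : 0 < |(((co x A B C n).1 : ℤ) : ℝ)| := by
      rw [abs_pos]
      exact Int.cast_ne_zero.mpr hne
    calc |((co x A B C n).1 : ℝ)| * |((pq x n : ℤ) : ℝ) - cq x n| * |((pq x n : ℤ) : ℝ) - yq x A B n|
        < |((co x A B C n).1 : ℝ)| * 1 * 1 := by
          apply mul_lt_mul' ?_ ?_ (abs_nonneg _) (by linarith)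
          · apply le_of_lt
            apply mul_lt_mul_of_pos_left ?_ hpos
            rw [abs_sub_comm, abs_of_pos hfr0]
            exact hfr1
          · rw [abs_sub_comm, abs_of_pos h0]
            exact h1'
      _ = |((co x A B C n).1 : ℝ)| := by ring
  have : |(co x A B C (n+1)).1| < |(co x A B C n).1| := by exact_mod_cast habs
  rw [Int.abs_eq_natAbs, Int.abs_eq_natAbs] at this
  exact_mod_cast this

lemma lag_exists_lt (x : ℝ) (hx : Irrational x) (A B C : ℤ) (hA : A ≠ 0)
    (hroot : (A : ℝ) * x ^ 2 + (B : ℝ) * x + (C : ℝ) = 0) :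
    ∃ n, yq x A B n < ((pq x n : ℤ) : ℝ) := by
  by_contra h
  push_neg at h
  have hlt : ∀ n, ((pq x n : ℤ) : ℝ) < yq x A B n := fun n =>
    lt_of_le_of_ne (h n) (Ne.symm ((lag_inv x hx A B C hA hroot n).2.2.2.ne_int (pq x n)))
  have hlt1 : ∀ n, yq x A B n - ((pq x n : ℤ) : ℝ) < 1 := by
    intro n
    by_contra h2
    push_neg at h2
    have hirr : Irrational (yq x A B n - ((pq x n : ℤ) : ℝ)) :=
      (lag_inv x hx A B C hA hroot n).2.2.2.sub_intCast _
    have h3 : 1 < yq x A B n - ((pq x n : ℤ) : ℝ) :=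
      lt_of_le_of_ne h2 (Ne.symm (hirr.ne_int 1 ∘ (by simp [·])))
    have h4 : yq x A B (n + 1) < 1 := by
      rw [yq_succ]
      rw [inv_lt_one_iff₀]
      right; exact h3
    have h5 : (1 : ℝ) ≤ ((pq x (n + 1) : ℤ) : ℝ) := by
      exact_mod_cast one_le_pq x hx n
    linarith [hlt (n + 1)]
  have hdec : ∀ k, (co x A B C (k + 1)).1.natAbs < (co x A B C k).1.natAbs := by
    intro k
    exact lag_dec x hx A B C hA hroot k (by linarith [hlt k]) (hlt1 k)
  have key : ∀ k, (co x A B C k).1.natAbs + k ≤ (co x A B C 0).1.natAbs := by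
    intro k
    induction k with
    | zero => simp
    | succ k ih =>
      have := hdec k
      omega
  have := key ((co x A B C 0).1.natAbs + 1)
  omega

lemma lag_neg (x : ℝ) (hx : Irrational x) (A B C : ℤ) (hA : A ≠ 0)
    (hroot : (A : ℝ) * x ^ 2 + (B : ℝ) * x + (C : ℝ) = 0) :
    ∃ M, ∀ n, M ≤ n → -1 < yq x A B n ∧ yq x A B n < 0 := by
  obtain ⟨n₀, hn₀⟩ := lag_exists_lt x hx A B C hA hroot
  have hirr : ∀ n, Irrational (yq x A B n) := fun n => (lag_inv x hx A B C hA hroot n).2.2.2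
  have hstep : ∀ n, yq x A B n < ((pq x n : ℤ) : ℝ) → yq x A B (n + 1) < 0 := by
    intro n hn
    rw [yq_succ]
    exact inv_lt_zero.mpr (by linarith)
  have hneg : ∀ k, yq x A B (n₀ + 1 + k) < 0 := by
    intro k
    induction k with
    | zero => exact hstep n₀ hn₀
    | succ k ih =>
      have hpq : (1 : ℝ) ≤ ((pq x (n₀ + 1 + k) : ℤ) : ℝ) := by
        rw [show n₀ + 1 + k = n₀ + k + 1 by omega]
        exact_mod_cast one_le_pq x hx (n₀ + k)
      exact hstep (n₀ + 1 + k) (by linarith)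
  refine ⟨n₀ + 2, fun n hn => ?_⟩
  obtain ⟨k, rfl⟩ := Nat.exists_eq_add_of_le hn
  have hkpred : yq x A B (n₀ + 1 + k) < 0 := hneg k
  have hpq : (1 : ℝ) ≤ ((pq x (n₀ + 1 + k) : ℤ) : ℝ) := by
    rw [show n₀ + 1 + k = n₀ + k + 1 by omega]
    exact_mod_cast one_le_pq x hx (n₀ + k)
  have ht : yq x A B (n₀ + 1 + k) - ((pq x (n₀ + 1 + k) : ℤ) : ℝ) < -1 := by linarith
  have heq : yq x A B (n₀ + 2 + k) = (yq x A B (n₀ + 1 + k) - ((pq x (n₀ + 1 + k) : ℤ) : ℝ))⁻¹ := by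
    have := yq_succ x A B (n₀ + 1 + k)
    rw [show n₀ + 2 + k = n₀ + 1 + k + 1 by omega, this]
  constructor
  · rw [heq]
    set t := yq x A B (n₀ + 1 + k) - ((pq x (n₀ + 1 + k) : ℤ) : ℝ)
    have htne : t ≠ 0 := by intro h; rw [h] at ht; norm_num at ht
    have hmul := mul_inv_cancel₀ htne
    nlinarith [hmul, ht]
  · rw [heq]
    exact inv_lt_zero.mpr (by linarith)


lemma int_le_sq (a : ℤ) : a ≤ a ^ 2 := by
  have h : 0 ≤ a * (a - 1) := by
    rcases le_or_gt a 0 with h | h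
    · have : a - 1 ≤ 0 := by omega
      nlinarith
    · exact mul_nonneg (by omega) (by omega)
  nlinarith

/-- Lagrange, 1768: the partial quotients of a quadratic irrational
are eventually periodic. -/
theorem stmt2 (x : ℝ) (hx : Irrational x)
    (A B C : ℤ) (hA : A ≠ 0)
    (hroot : (A : ℝ) * x ^ 2 + (B : ℝ) * x + (C : ℝ) = 0) :
    ∃ N T : ℕ, 1 ≤ T ∧ ∀ n, N ≤ n → pq x (n + T) = pq x n := by
  obtain ⟨M, hM⟩ := lag_neg x hx A B C hA hroot
  set D : ℤ := B ^ 2 - 4 * A * C with hD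
  -- basic bound on the leading coefficient
  have hAb : ∀ n, M + 1 ≤ n → (co x A B C n).1 ^ 2 < D := by
    intro n hn
    obtain ⟨hne, hB, hC, hyirr⟩ := lag_inv x hx A B C hA hroot n
    have hdiscR : ((D : ℤ) : ℝ) = ((co x A B C n).1 : ℝ) ^ 2 * (cq x n - yq x A B n) ^ 2 := by
      have h1 : ((D : ℤ) : ℝ) = ((co x A B C n).2.1 : ℝ) ^ 2
          - 4 * ((co x A B C n).1 : ℝ) * ((co x A B C n).2.2 : ℝ) := by
        rw [hD]
        push_cast [← lag_disc x A B C n]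
        ring
      rw [h1, hB, hC]
      ring
    have hu : 1 < cq x n := by
      obtain ⟨k, rfl⟩ := Nat.exists_eq_add_of_le hn
      rw [show M + 1 + k = M + k + 1 by omega]
      exact one_lt_cq x hx (M + k)
    have hv := hM n (by omega)
    have huv : 1 < (cq x n - yq x A B n) ^ 2 := by nlinarith [hv.1, hv.2]
    have hA2 : (1 : ℝ) ≤ ((co x A B C n).1 : ℝ) ^ 2 := by
      have : (1 : ℤ) ≤ (co x A B C n).1 ^ 2 := by
        rcases lt_or_gt_of_ne hne with h | h <;> nlinarith
      exact_mod_cast this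
    have : (((co x A B C n).1 : ℝ)) ^ 2 < ((D : ℤ) : ℝ) := by nlinarith
    exact_mod_cast this
  have hD1 : 1 ≤ D := by
    have h := hAb (M + 1) le_rfl
    nlinarith [sq_nonneg (co x A B C (M + 1)).1]
  -- full coefficient bounds for n ≥ M + 2
  have hbounds : ∀ n, M + 2 ≤ n → (co x A B C n).1 ^ 2 ≤ D ∧ (co x A B C n).2.1 ^ 2 ≤ 5 * D ∧
      (co x A B C n).2.2 ^ 2 ≤ D := by
    intro n hn
    obtain ⟨k, rfl⟩ := Nat.exists_eq_add_of_le hn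
    have ha := (hAb (M + 2 + k) (by omega)).le
    have hc : (co x A B C (M + 2 + k)).2.2 ^ 2 ≤ D := by
      have : (co x A B C (M + 2 + k)).2.2 = (co x A B C (M + 1 + k)).1 := by
        rw [show M + 2 + k = (M + 1 + k) + 1 by omega, co_succ]
      rw [this]
      exact (hAb (M + 1 + k) (by omega)).le
    refine ⟨ha, ?_, hc⟩
    have hd := lag_disc x A B C (M + 2 + k)
    nlinarith [sq_nonneg ((co x A B C (M + 2 + k)).1 + (co x A B C (M + 2 + k)).2.2),
      sq_nonneg ((co x A B C (M + 2 + k)).1 - (co x A B C (M + 2 + k)).2.2)]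
  -- the finite target set
  set S : Set (ℤ × ℤ) := Set.Icc (-D) D ×ˢ Set.Icc (-(5 * D)) (5 * D) with hS
  set s : ℝ := Real.sqrt ((D : ℤ) : ℝ) with hs
  set t : Set ℝ :=
    ((fun p : ℤ × ℤ => (-(p.2 : ℝ) + s) / (2 * (p.1 : ℝ))) '' S) ∪
    ((fun p : ℤ × ℤ => (-(p.2 : ℝ) - s) / (2 * (p.1 : ℝ))) '' S) with ht
  have hSfin : S.Finite := (Set.finite_Icc _ _).prod (Set.finite_Icc _ _)
  have htfin : t.Finite := (hSfin.image _).union (hSfin.image _)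
  have hmaps : Set.MapsTo (cq x) (Set.Ici (M + 2)) t := by
    intro n hn
    simp only [Set.mem_Ici] at hn
    obtain ⟨hne, hB, hC, hyirr⟩ := lag_inv x hx A B C hA hroot n
    obtain ⟨ha2, hb2, hc2⟩ := hbounds n hn
    have haR : ((co x A B C n).1 : ℝ) ≠ 0 := Int.cast_ne_zero.mpr hne
    have hrootn : ((co x A B C n).1 : ℝ) * (cq x n * cq x n) + ((co x A B C n).2.1 : ℝ) * cq x n
        + ((co x A B C n).2.2 : ℝ) = 0 := by
      rw [hB, hC]; ring
    have hdis : discrim ((co x A B C n).1 : ℝ) ((co x A B C n).2.1 : ℝ) ((co x A B C n).2.2 : ℝ)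
        = s * s := by
      rw [discrim, hs, Real.mul_self_sqrt (by exact_mod_cast (show (0:ℤ) ≤ D by omega) : (0:ℝ) ≤ ((D : ℤ) : ℝ))]
      push_cast [← lag_disc x A B C n, hD]
      ring
    have hmem : ((co x A B C n).1, (co x A B C n).2.1) ∈ S := by
      rw [hS]
      constructor
      · simp only [Set.mem_Icc]
        constructor
        · nlinarith [int_le_sq (-(co x A B C n).1)]
        · nlinarith [int_le_sq (co x A B C n).1]
      · simp only [Set.mem_Icc]
        constructor
        · nlinarith [int_le_sq (-(co x A B C n).2.1)]
        · nlinarith [int_le_sq (co x A B C n).2.1]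
    rcases (quadratic_eq_zero_iff haR hdis (cq x n)).mp hrootn with h | h
    · exact Or.inl ⟨_, hmem, h.symm⟩
    · exact Or.inr ⟨_, hmem, h.symm⟩
  obtain ⟨m, -, n, -, hmn, heq⟩ :=
    (Set.Ici_infinite (M + 2)).exists_ne_map_eq_of_mapsTo hmaps htfin
  have main : ∀ i j : ℕ, i < j → cq x i = cq x j →
      ∃ N T : ℕ, 1 ≤ T ∧ ∀ n, N ≤ n → pq x (n + T) = pq x n := by
    intro i j hij hcq
    refine ⟨i, j - i, by omega, fun n hn => ?_⟩
    obtain ⟨k, rfl⟩ := Nat.exists_eq_add_of_le hn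
    rw [pq, pq, show i + k + (j - i) = j + k by omega, ← cq_shift x hcq k]
  rcases lt_or_gt_of_ne hmn with h | h
  · exact main m n h heq
  · exact main n m h heq.symm
end

section
/- Let x be a reduced quadratic irrational whose sequence of partial quotients (a_n) is purely periodic with minimal period T. Then y = −1/x* (where x* is the algebraic conjugate of x) is also a reduced quadratic irrational, and its sequence of partial quotients (b_n) is the reversed period: for all n ≥ 0, b_n = a_{(T−1−n) mod T}. -/
lemma fract_ne_zero_of_irrational {z : ℝ} (hz : Irrational z) : Int.fract z ≠ 0 := by
  intro h0
  have : z = (⌊z⌋ : ℝ) := by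
    have := Int.fract_add_floor z
    rw [h0] at this; linarith
  exact hz.ne_int _ this

lemma cq_irrational {x : ℝ} (hx : Irrational x) : ∀ n, Irrational (cq x n)
  | 0 => hx
  | n+1 => by
    have h := cq_irrational hx n
    have : Irrational (Int.fract (cq x n)) := by
      rw [Int.fract]; exact h.sub_intCast _
    simpa [cq] using this.inv

lemma cq_add (x : ℝ) (m : ℕ) : ∀ n, cq x (n + m) = cq (cq x m) n
  | 0 => by rw [Nat.zero_add]; rfl
  | n+1 => by
    have : n + 1 + m = (n + m) + 1 := by ring
    rw [this]
    show (Int.fract (cq x (n+m)))⁻¹ = (Int.fract (cq (cq x m) n))⁻¹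
    rw [cq_add x m n]

open GenContFract in
lemma stream_eq {x : ℝ} (hx : Irrational x) :
    ∀ n, IntFractPair.stream x n = some ⟨pq x n, Int.fract (cq x n)⟩
  | 0 => rfl
  | n+1 => by
    have h := stream_eq hx n
    have hfr : Int.fract (cq x n) ≠ 0 :=
      fract_ne_zero_of_irrational (cq_irrational hx n)
    have := IntFractPair.stream_succ_of_some h hfr
    rw [this]
    congr 1

lemma of_eq_of {u w : ℝ} (hu : Irrational u) (hw : Irrational w)
    (h : ∀ n, pq u n = pq w n) : GenContFract.of u = GenContFract.of w := by
  have h0 : (GenContFract.of u).h = (GenContFract.of w).h := by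
    rw [GenContFract.of_h_eq_floor, GenContFract.of_h_eq_floor]
    exact_mod_cast (show ⌊u⌋ = ⌊w⌋ from h 0)
  have hs : (GenContFract.of u).s = (GenContFract.of w).s := by
    apply Stream'.Seq.ext; intro n
    rw [GenContFract.get?_of_eq_some_of_succ_get?_intFractPair_stream (stream_eq hu (n+1)),
        GenContFract.get?_of_eq_some_of_succ_get?_intFractPair_stream (stream_eq hw (n+1))]
    simp [h (n+1)]
  cases hou : GenContFract.of u with
  | mk a b =>
    cases how : GenContFract.of w with
    | mk c e =>
      rw [hou, how] at h0 hs
      simp_all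

lemma cf_unique {u w : ℝ} (hu : Irrational u) (hw : Irrational w)
    (h : ∀ n, pq u n = pq w n) : u = w := by
  have hof := of_eq_of hu hw h
  have h1 := GenContFract.of_convergence u
  have h2 := GenContFract.of_convergence w
  rw [hof] at h1
  exact tendsto_nhds_unique h1 h2

lemma irr_sqrt {d : ℕ} (hd2 : 2 ≤ d) (hdsf : Squarefree d) :
    Irrational (Real.sqrt d) := by
  rw [irrational_sqrt_natCast_iff]
  intro ⟨k, hk⟩
  have hu : IsUnit k := hdsf k (by rw [hk])
  rw [Nat.isUnit_iff] at hu
  subst hu hk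
  omega

lemma rep_unique {d : ℕ} (hsd : Irrational (Real.sqrt d)) {a b a' b' : ℚ}
    (h : (a : ℝ) + b * Real.sqrt d = (a' : ℝ) + b' * Real.sqrt d) :
    a = a' ∧ b = b' := by
  by_cases hb : b = b'
  · subst hb
    constructor
    · have : (a : ℝ) = a' := by linarith
      exact_mod_cast this
    · rfl
  · exfalso
    have hbR : (b : ℝ) - b' ≠ 0 := by
      intro h0
      apply hb
      have : (b : ℝ) = b' := by linarith
      exact_mod_cast this
    have : Real.sqrt d = ((a' - a) / (b - b') : ℚ) := by
      push_cast
      field_simp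
      nlinarith [h]
    exact hsd ⟨_, this.symm⟩

noncomputable def rtp (d : ℕ) (x : ℝ) (r t : ℚ) : ℕ → ℚ × ℚ
  | 0 => (r, t)
  | n+1 =>
    (((rtp d x r t n).1 - pq x n) / (((rtp d x r t n).1 - pq x n)^2 - (rtp d x r t n).2^2 * d),
     -(rtp d x r t n).2 / (((rtp d x r t n).1 - pq x n)^2 - (rtp d x r t n).2^2 * d))

lemma inv_mem_Ioo {w : ℝ} (hw : w < -1) : -1 < w⁻¹ ∧ w⁻¹ < 0 := by
  have hw0 : w ≠ 0 := by linarith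
  have h1 : w⁻¹ < 0 := inv_lt_zero.mpr (by linarith)
  have h2 : -1 < w⁻¹ := by
    nlinarith [mul_inv_cancel₀ hw0]
  exact ⟨h2, h1⟩

lemma invar {d : ℕ} (hd2 : 2 ≤ d) (hsd : Irrational (Real.sqrt d))
    {r t : ℚ} (ht : t ≠ 0) {x : ℝ} (hxirr : Irrational x)
    (hx : x = (r : ℝ) + t * Real.sqrt d) (hx1 : 1 < x)
    (hc1 : -1 < (r : ℝ) - t * Real.sqrt d) (hc2 : (r : ℝ) - t * Real.sqrt d < 0) :
    ∀ n,
      cq x n = ((rtp d x r t n).1 : ℝ) + ((rtp d x r t n).2 : ℝ) * Real.sqrt d ∧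
      (rtp d x r t n).2 ≠ 0 ∧ 1 < cq x n ∧
      -1 < ((rtp d x r t n).1 : ℝ) - ((rtp d x r t n).2 : ℝ) * Real.sqrt d ∧
      ((rtp d x r t n).1 : ℝ) - ((rtp d x r t n).2 : ℝ) * Real.sqrt d < 0 := by
  intro n
  induction n with
  | zero => exact ⟨hx, ht, hx1, hc1, hc2⟩
  | succ n ih =>
    obtain ⟨hrep, htn, hgt, hS1, hS2⟩ := ih
    set sd := Real.sqrt d with hsddef
    have hsd2 : sd ^ 2 = (d : ℝ) := Real.sq_sqrt (by positivity)
    set R := (rtp d x r t n).1 with hRdef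
    set Tq := (rtp d x r t n).2 with hTdef
    set a : ℤ := pq x n with hadef
    set u : ℚ := R - a with hudef
    set q : ℚ := u ^ 2 - Tq ^ 2 * d with hqdef
    have hstep : rtp d x r t (n+1) = (u / q, -Tq / q) := by
      rw [rtp]
    have ha1 : 1 ≤ a := Int.le_floor.mpr (by push_cast; linarith)
    have ha1R : (1 : ℝ) ≤ (a : ℝ) := by exact_mod_cast ha1
    have hirrn : Irrational (cq x n) := cq_irrational hxirr n
    have hf0 : 0 < Int.fract (cq x n) :=
      lt_of_le_of_ne (Int.fract_nonneg _) (Ne.symm (fract_ne_zero_of_irrational hirrn))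
    have hf1 : Int.fract (cq x n) < 1 := Int.fract_lt_one _
    have hcq1 : cq x (n+1) = (Int.fract (cq x n))⁻¹ := rfl
    have hgt' : 1 < cq x (n+1) := by
      show 1 < (Int.fract (cq x n))⁻¹
      exact (one_lt_inv₀ hf0).mpr hf1
    have hfl : ⌊cq x n⌋ = a := rfl
    have hfr_eq : Int.fract (cq x n) = (u : ℝ) + (Tq : ℝ) * sd := by
      rw [Int.fract, hfl, hrep, hudef]
      push_cast
      ring
    have hSa : ((u : ℝ) - (Tq : ℝ) * sd)
        = ((R : ℝ) - (Tq : ℝ) * sd) - (a : ℝ) := by rw [hudef]; push_cast; ring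
    have hSa_neg : (u : ℝ) - (Tq : ℝ) * sd < -1 := by rw [hSa]; linarith
    have hP : (q : ℝ) = ((u : ℝ) + (Tq : ℝ) * sd) * ((u : ℝ) - (Tq : ℝ) * sd) := by
      rw [hqdef, hudef]
      push_cast
      rw [← hsd2]
      ring
    have hA : (u : ℝ) + (Tq : ℝ) * sd ≠ 0 := by rw [← hfr_eq]; linarith
    have hB : (u : ℝ) - (Tq : ℝ) * sd ≠ 0 := by linarith
    have hqR : (q : ℝ) ≠ 0 := by rw [hP]; exact mul_ne_zero hA hB
    have hq0 : q ≠ 0 := by exact_mod_cast hqR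
    have hinv : ((u : ℝ) + (Tq : ℝ) * sd)⁻¹
        = ((u : ℝ) - (Tq : ℝ) * sd) / (q : ℝ) := by
      rw [hP]
      field_simp
    refine ⟨?_, ?_, hgt', ?_, ?_⟩
    · rw [hcq1, hfr_eq, hinv, hstep]
      push_cast
      ring
    · rw [hstep]
      simp only
      exact div_ne_zero (neg_ne_zero.mpr htn) hq0
    · rw [hstep]
      have hS' : ((u / q : ℚ) : ℝ) - ((-Tq / q : ℚ) : ℝ) * sd
          = ((u : ℝ) - (Tq : ℝ) * sd)⁻¹ := by
        push_cast
        rw [inv_eq_one_div, hP]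
        field_simp
        ring
      simp only
      rw [hS']
      exact (inv_mem_Ioo hSa_neg).1
    · rw [hstep]
      have hS' : ((u / q : ℚ) : ℝ) - ((-Tq / q : ℚ) : ℝ) * sd
          = ((u : ℝ) - (Tq : ℝ) * sd)⁻¹ := by
        push_cast
        rw [inv_eq_one_div, hP]
        field_simp
        ring
      simp only
      rw [hS']
      exact (inv_mem_Ioo hSa_neg).2

lemma Sstep {d : ℕ} (hd2 : 2 ≤ d) {r t : ℚ} {x : ℝ} (hxirr : Irrational x) (n : ℕ)
    (hrep : cq x n = ((rtp d x r t n).1 : ℝ) + ((rtp d x r t n).2 : ℝ) * Real.sqrt d)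
    (htn : (rtp d x r t n).2 ≠ 0) (hgt : 1 < cq x n)
    (hS2 : ((rtp d x r t n).1 : ℝ) - ((rtp d x r t n).2 : ℝ) * Real.sqrt d < 0) :
    ((rtp d x r t (n+1)).1 : ℝ) - ((rtp d x r t (n+1)).2 : ℝ) * Real.sqrt d
      = (((rtp d x r t n).1 : ℝ) - ((rtp d x r t n).2 : ℝ) * Real.sqrt d - (pq x n : ℝ))⁻¹ := by
  set sd := Real.sqrt d with hsddef
  have hsd2 : sd ^ 2 = (d : ℝ) := Real.sq_sqrt (by positivity)
  set R := (rtp d x r t n).1 with hRdef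
  set Tq := (rtp d x r t n).2 with hTdef
  set a : ℤ := pq x n with hadef
  set u : ℚ := R - a with hudef
  set q : ℚ := u ^ 2 - Tq ^ 2 * d with hqdef
  have hstep : rtp d x r t (n+1) = (u / q, -Tq / q) := by
    rw [rtp]
  have ha1 : 1 ≤ a := Int.le_floor.mpr (by push_cast; linarith)
  have ha1R : (1 : ℝ) ≤ (a : ℝ) := by exact_mod_cast ha1
  have hirrn : Irrational (cq x n) := cq_irrational hxirr n
  have hf0 : 0 < Int.fract (cq x n) :=
    lt_of_le_of_ne (Int.fract_nonneg _) (Ne.symm (fract_ne_zero_of_irrational hirrn))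
  have hfl : ⌊cq x n⌋ = a := rfl
  have hfr_eq : Int.fract (cq x n) = (u : ℝ) + (Tq : ℝ) * sd := by
    rw [Int.fract, hfl, hrep, hudef]
    push_cast
    ring
  have hSa : ((u : ℝ) - (Tq : ℝ) * sd)
      = ((R : ℝ) - (Tq : ℝ) * sd) - (a : ℝ) := by rw [hudef]; push_cast; ring
  have hSa_neg : (u : ℝ) - (Tq : ℝ) * sd < -1 := by rw [hSa]; linarith
  have hP : (q : ℝ) = ((u : ℝ) + (Tq : ℝ) * sd) * ((u : ℝ) - (Tq : ℝ) * sd) := by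
    rw [hqdef, hudef]
    push_cast
    rw [← hsd2]
    ring
  have hA : (u : ℝ) + (Tq : ℝ) * sd ≠ 0 := by rw [← hfr_eq]; linarith
  have hB : (u : ℝ) - (Tq : ℝ) * sd ≠ 0 := by linarith
  have hqR : (q : ℝ) ≠ 0 := by rw [hP]; exact mul_ne_zero hA hB
  rw [hstep, ← hSa]
  show ((u / q : ℚ) : ℝ) - ((-Tq / q : ℚ) : ℝ) * sd = ((u : ℝ) - (Tq : ℝ) * sd)⁻¹
  push_cast
  rw [inv_eq_one_div, hP]
  field_simp
  ring

/-- if `x` is a reduced quadratic irrational with purely periodic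
partial quotients of minimal period `T`, then `y = -1/x*` is a reduced quadratic
irrational whose partial quotients are the reversed period:
`b_n = a_{(T-1-n) mod T}` (note `(T-1-n) mod T = T-1-(n mod T)`). -/
theorem stmt5 (d : ℕ) (hd2 : 2 ≤ d) (hdsf : Squarefree d)
    (r t : ℚ) (ht : t ≠ 0) (x : ℝ)
    (hx : x = (r : ℝ) + (t : ℝ) * Real.sqrt d)
    (hx1 : 1 < x)
    (hconj1 : -1 < (r : ℝ) - (t : ℝ) * Real.sqrt d)
    (hconj2 : (r : ℝ) - (t : ℝ) * Real.sqrt d < 0)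
    (T : ℕ) (hT : 1 ≤ T)
    (hper : ∀ n, pq x (n + T) = pq x n)
    (hmin : ∀ T', 1 ≤ T' → (∀ n, pq x (n + T') = pq x n) → T ≤ T')
    (y : ℝ) (hy : y = -1 / ((r : ℝ) - (t : ℝ) * Real.sqrt d)) :
    (∃ r' t' : ℚ, t' ≠ 0 ∧ y = (r' : ℝ) + (t' : ℝ) * Real.sqrt d ∧ 1 < y ∧
      -1 < (r' : ℝ) - (t' : ℝ) * Real.sqrt d ∧ (r' : ℝ) - (t' : ℝ) * Real.sqrt d < 0)
    ∧ ∀ n : ℕ, pq y n = pq x (T - 1 - n % T) := by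
  have hsd : Irrational (Real.sqrt d) := irr_sqrt hd2 hdsf
  have hsd2 : Real.sqrt d ^ 2 = (d : ℝ) := Real.sq_sqrt (by positivity)
  have hxirr : Irrational x := by
    rw [hx]; exact (hsd.ratCast_mul ht).ratCast_add r
  have inv := invar hd2 hsd ht hxirr hx hx1 hconj1 hconj2
  -- periodicity of complete quotients
  have hxT : cq x T = x := by
    apply cf_unique (cq_irrational hxirr T) hxirr
    intro n
    show ⌊cq (cq x T) n⌋ = ⌊cq x n⌋
    rw [← cq_add]
    exact hper n
  -- the conjugate sequence
  set S : ℕ → ℝ := fun n =>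
    ((rtp d x r t n).1 : ℝ) - ((rtp d x r t n).2 : ℝ) * Real.sqrt d with hSdef
  have hS0 : S 0 = (r : ℝ) - (t : ℝ) * Real.sqrt d := rfl
  have hrtT : (rtp d x r t T).1 = r ∧ (rtp d x r t T).2 = t := by
    apply rep_unique hsd
    rw [← (inv T).1, hxT, hx]
  have hST : S T = S 0 := by
    have h1 : (rtp d x r t 0) = (r, t) := rfl
    show ((rtp d x r t T).1 : ℝ) - ((rtp d x r t T).2 : ℝ) * Real.sqrt d
        = ((rtp d x r t 0).1 : ℝ) - ((rtp d x r t 0).2 : ℝ) * Real.sqrt d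
    rw [hrtT.1, hrtT.2, h1]
  have hSb : ∀ n, -1 < S n ∧ S n < 0 := fun n => ⟨(inv n).2.2.2.1, (inv n).2.2.2.2⟩
  have hSstep : ∀ n, S (n + 1) = (S n - (pq x n : ℝ))⁻¹ := fun n =>
    Sstep hd2 hxirr n (inv n).1 (inv n).2.1 (inv n).2.2.1 (inv n).2.2.2.2
  set Y : ℕ → ℝ := fun n => -(S n)⁻¹ with hYdef
  have hYstep : ∀ n, Y (n + 1) = (pq x n : ℝ) - S n := by
    intro n
    have h := hSstep n
    show -(S (n+1))⁻¹ = (pq x n : ℝ) - S n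
    rw [h, inv_inv]
    ring
  have hYfloor : ∀ n, ⌊Y (n + 1)⌋ = pq x n := by
    intro n
    rw [hYstep n]
    rw [Int.floor_eq_iff]
    constructor
    · linarith [(hSb n).2]
    · push_cast; linarith [(hSb n).1]
  have hYfract : ∀ n, Int.fract (Y (n + 1)) = -(S n) := by
    intro n
    rw [Int.fract, hYfloor n, hYstep n]
    ring
  have hyY : y = Y T := by
    rw [hy, hYdef]
    simp only [hST, hS0]
    rw [neg_div, one_div]
  -- the chain of complete quotients of y
  have hchain : ∀ k, k ≤ T → cq y k = Y (T - k) := by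
    intro k
    induction k with
    | zero => intro _; simpa [cq] using hyY
    | succ k ihk =>
      intro hk1
      have hkT : k < T := by omega
      have hm : T - k = (T - (k + 1)) + 1 := by omega
      show (Int.fract (cq y k))⁻¹ = Y (T - (k + 1))
      rw [ihk hkT.le, hm, hYfract (T - (k + 1))]
      rw [inv_neg, hYdef]
  have hcqyT : cq y T = y := by
    rw [hchain T le_rfl]
    simp only [Nat.sub_self]
    rw [hyY, hYdef]
    simp only [hST]
  have hyper : ∀ n, pq y (n + T) = pq y n := by
    intro n
    show ⌊cq y (n + T)⌋ = ⌊cq y n⌋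
    rw [cq_add, hcqyT]
  have hmul : ∀ k n, pq y (n + T * k) = pq y n := by
    intro k
    induction k with
    | zero => intro n; rfl
    | succ k ihk =>
      intro n
      have : n + T * (k + 1) = (n + T * k) + T := by ring
      rw [this, hyper, ihk]
  have hmod : ∀ n, pq y n = pq y (n % T) := by
    intro n
    conv_lhs => rw [← Nat.mod_add_div n T]
    exact hmul (n / T) (n % T)
  have hlt : ∀ k, k < T → pq y k = pq x (T - 1 - k) := by
    intro k hk
    have hm : T - k = (T - 1 - k) + 1 := by omega
    show ⌊cq y k⌋ = pq x (T - 1 - k)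
    rw [hchain k hk.le, hm]
    exact hYfloor (T - 1 - k)
  constructor
  · -- the quadratic irrational form of y
    set q0 : ℚ := r ^ 2 - t ^ 2 * d with hq0def
    have hprod : ((r : ℝ) - t * Real.sqrt d) * ((r : ℝ) + t * Real.sqrt d) = (q0 : ℝ) := by
      rw [hq0def]; push_cast; linear_combination (-(t : ℝ)^2) * hsd2
    have hxne : (r : ℝ) + t * Real.sqrt d ≠ 0 := by rw [← hx]; linarith
    have hAne : (r : ℝ) - t * Real.sqrt d ≠ 0 := ne_of_lt hconj2
    have hq0R : (q0 : ℝ) ≠ 0 := by rw [← hprod]; exact mul_ne_zero hAne hxne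
    have hq0 : q0 ≠ 0 := by exact_mod_cast hq0R
    refine ⟨-r / q0, -t / q0, div_ne_zero (neg_ne_zero.mpr ht) hq0, ?_, ?_, ?_, ?_⟩
    · -- y = r' + t'√d
      have hE : ((-r / q0 : ℚ) : ℝ) + ((-t / q0 : ℚ) : ℝ) * Real.sqrt d
          = -((r : ℝ) + t * Real.sqrt d) / (q0 : ℝ) := by push_cast; ring
      rw [hy, hE, div_eq_div_iff hAne hq0R]
      linear_combination hprod
    · -- 1 < y
      rw [hy]
      have h1 := hconj1
      have h2 := hconj2
      have hA0 : ((r : ℝ) - t * Real.sqrt d) ≠ 0 := hAne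
      rw [neg_div, one_div]
      nlinarith [mul_inv_cancel₀ hA0, inv_lt_zero.mpr h2]
    · -- -1 < y*
      have hE2 : ((-r / q0 : ℚ) : ℝ) - ((-t / q0 : ℚ) : ℝ) * Real.sqrt d
          = -(1 / ((r : ℝ) + t * Real.sqrt d)) := by
        push_cast
        have key : (-(r:ℝ) / q0) - (-(t:ℝ) / q0) * Real.sqrt d
            = -((r:ℝ) - t * Real.sqrt d) / (q0:ℝ) := by ring
        rw [key, ← neg_div, div_eq_div_iff hq0R hxne]
        linear_combination -hprod
      have hxpos : (0 : ℝ) < (r : ℝ) + t * Real.sqrt d := by rw [← hx]; linarith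
      have hxlt : 1 / ((r : ℝ) + t * Real.sqrt d) < 1 := by
        rw [div_lt_one hxpos, ← hx]; exact hx1
      have hxinvpos : 0 < 1 / ((r : ℝ) + t * Real.sqrt d) := by positivity
      rw [hE2]
      linarith
    · -- y* < 0
      have hE2 : ((-r / q0 : ℚ) : ℝ) - ((-t / q0 : ℚ) : ℝ) * Real.sqrt d
          = -(1 / ((r : ℝ) + t * Real.sqrt d)) := by
        push_cast
        have key : (-(r:ℝ) / q0) - (-(t:ℝ) / q0) * Real.sqrt d
            = -((r:ℝ) - t * Real.sqrt d) / (q0:ℝ) := by ring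
        rw [key, ← neg_div, div_eq_div_iff hq0R hxne]
        linear_combination -hprod
      have hxpos : (0 : ℝ) < (r : ℝ) + t * Real.sqrt d := by rw [← hx]; linarith
      have hxinvpos : 0 < 1 / ((r : ℝ) + t * Real.sqrt d) := by positivity
      rw [hE2]
      linarith
  · intro n
    rw [hmod n]
    exact hlt (n % T) (Nat.mod_lt n hT)
end
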